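/- If κ is extendible and λ > κ is a Σ₂-correct cardinal, then for any elementary embedding j : V_{λ+1} → V_{λ'+1} with critical point κ and j(κ) > λ, the set j[λ] = {j(α) : α < λ} has order type λ, and λ is Σ₂-correct in V_{j(κ)}; hence j[λ] ∈ T_{j(κ), j(λ)}. -/

import Mathlib

open FirstOrder


/-- The ZFC universe, pinned to the lowest universe level. -/
abbrev ZS : Type 1 := ZFSet.{0}
/-! # Shared framework: the ZFC universe `ZS`, its rank hierarchy, first-order
satisfaction, Lévy-style Σ₂-correctness, normal fine ultrafilters on `P_κ(λ)`,
extendible cardinals, and abstract interfaces for forcing extensions. -/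

/-- The first-order language of set theory: a single binary relation `∈`. -/
def LST : FirstOrder.Language :=
  { Functions := fun _ => Empty
    Relations := fun n => match n with | 2 => PUnit | _ => Empty }

/-- Interpret a binary relation as an `LST`-structure. -/
def memStructure {M : Type*} (r : M → M → Prop) : LST.Structure M where
  funMap := fun {_} f _ => f.elim
  RelMap := fun {n} R v =>
    match n, R, v with
    | 0, R, _ => R.elim
    | 1, R, _ => R.elim
    | 2, _, v => r (v 0) (v 1)
    | (_+3), R, _ => R.elim

/-- The rank-initial segment `V_o` of the ZFC universe, as a class of `ZS`s. -/
def Vseg (o : Ordinal.{0}) : Set ZS := {x | ZFSet.rank x < o}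

noncomputable instance VsegStructure (o : Ordinal.{0}) : LST.Structure (Vseg o) :=
  memStructure (fun x y => x.1 ∈ y.1)

noncomputable instance zfStructure : LST.Structure ZS := memStructure (· ∈ ·)

noncomputable instance classStructure (M : Set ZS) : LST.Structure M :=
  memStructure (fun x y => x.1 ∈ y.1)

/-- Satisfaction of a formula with one parameter in `V_o`. -/
def SatIn (o : Ordinal.{0}) (φ : LST.Formula (Fin 1)) (a : ZS) : Prop :=
  ∃ h : ZFSet.rank a < o, φ.Realize (fun _ => (⟨a, h⟩ : Vseg o))

/-- Satisfaction of a formula with two parameters in `V_o`. -/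
def SatIn2 (o : Ordinal.{0}) (φ : LST.Formula (Fin 2)) (a b : ZS) : Prop :=
  ∃ (ha : ZFSet.rank a < o) (hb : ZFSet.rank b < o),
    φ.Realize (![(⟨a, ha⟩ : Vseg o), ⟨b, hb⟩])

/-- `μ` is a Σ₂-correct ordinal, via the Lévy characterization: Σ₂ facts about a
parameter are exactly those of the form "there is an ordinal `β` with `V_β ⊨ ψ(a)`". -/
def Sigma2Correct (μ : Ordinal.{0}) : Prop :=
  ∀ (φ : LST.Formula (Fin 1)) (a : ZS), ZFSet.rank a < μ →
    ((∃ β, SatIn β φ a) ↔ (∃ β < μ, SatIn β φ a))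

/-- `μ` is Σ₂-correct in `V_κ`. -/
def Sigma2CorrectIn (μ κ : Ordinal.{0}) : Prop :=
  μ < κ ∧ ∀ (φ : LST.Formula (Fin 1)) (a : ZS), ZFSet.rank a < μ →
    ((∃ β < κ, SatIn β φ a) ↔ (∃ β < μ, SatIn β φ a))

/-- `x` is the von Neumann ordinal corresponding to the (Lean) ordinal `o`. -/
def OrdZ (o : Ordinal.{0}) (x : ZS) : Prop := x.IsOrdinal ∧ ZFSet.rank x = o

/-- `α` is a von Neumann ordinal below `o`. -/
def ZOrd (o : Ordinal.{0}) (α : ZS) : Prop := α.IsOrdinal ∧ ZFSet.rank α < o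

/-- `σ` is a member of `P_κ(λ)`: a set of ordinals below `lam` of cardinality `< κ`. -/
def memPkl (κ : Cardinal.{0}) (lam : Ordinal.{0}) (σ : ZS) : Prop :=
  (∀ x ∈ σ, ZOrd lam x) ∧ Cardinal.mk σ.toSet < Cardinal.lift.{1} κ

/-- The order type of a set `σ` of von Neumann ordinals (as an `Ordinal.{1}`). -/
noncomputable def otype (σ : ZS) : Ordinal.{1} :=
  Ordinal.type (Subrel ((· < ·) : Ordinal.{0} → Ordinal.{0} → Prop) (· ∈ ZFSet.rank '' σ.toSet))

/-- `σ` has order type `μ`. -/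
def HasOtype (σ : ZS) (μ : Ordinal.{0}) : Prop := Ordinal.lift.{1} μ = otype σ

/-- `σ ∈ T_{κ,λ}`: `σ ∈ P_κ(λ)` and the order type of `σ` is Σ₂-correct in `V_κ`. -/
def memT (κ : Cardinal.{0}) (lam : Ordinal.{0}) (σ : ZS) : Prop :=
  memPkl κ lam σ ∧ ∃ μ : Ordinal.{0}, HasOtype σ μ ∧ Sigma2CorrectIn μ κ.ord

/-- `σ` lies in the analogue of `T_{κ,λ}` for an abstract correctness predicate `IC`
(used for `T_{κ,λ}*`, where `IC` is "indestructibly Σ₂-correct in `V_κ`"). -/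
def memTP (κ : Cardinal.{0}) (IC : Ordinal.{0} → Prop) (lam : Ordinal.{0}) (σ : ZS) : Prop :=
  memPkl κ lam σ ∧ ∃ μ : Ordinal.{0}, HasOtype σ μ ∧ IC μ

/-- `U` (a class of subsets of the `ZS` `T`) is a normal fine `κ`-complete
ultrafilter on `T ⊆ P_κ(λ)`. -/
structure IsNFUltra (κ : Cardinal.{0}) (lam : Ordinal.{0}) (T : ZS) (U : Set ZS) : Prop where
  mem_sub : ∀ A ∈ U, A ⊆ T
  top : T ∈ U
  bot : (∅ : ZS) ∉ U
  upward : ∀ A ∈ U, ∀ B : ZS, B ⊆ T → A ⊆ B → B ∈ U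
  ultra : ∀ A : ZS, A ⊆ T → A ∉ U →
    ∀ B : ZS, (∀ x, x ∈ B ↔ x ∈ T ∧ x ∉ A) → B ∈ U
  complete : ∀ s : Set ZS, s ⊆ U → s.Nonempty → Cardinal.mk s < Cardinal.lift.{1} κ →
    ∀ A : ZS, (∀ x, x ∈ A ↔ x ∈ T ∧ ∀ B ∈ s, x ∈ B) → A ∈ U
  fine : ∀ α : ZS, ZOrd lam α →
    ∀ A : ZS, (∀ x, x ∈ A ↔ x ∈ T ∧ α ∈ x) → A ∈ U
  normal : ∀ f : ZS → ZS, (∀ α : ZS, ZOrd lam α → f α ∈ U) →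
    ∀ A : ZS, (∀ x, x ∈ A ↔ x ∈ T ∧ ∀ α ∈ x, x ∈ f α) → A ∈ U

/-- `M` is a transitive class containing all ordinals (an inner-model carrier). -/
def IsInner (M : Set ZS) : Prop :=
  (∀ x ∈ M, ∀ y : ZS, y ∈ x → y ∈ M) ∧ ∀ x : ZS, x.IsOrdinal → x ∈ M

/-- `j` is an elementary embedding of the universe `V` into the class `M`. -/
structure ElemEmbInto (M : Set ZS) (j : ZS → ZS) : Prop where
  maps : ∀ x, j x ∈ M
  elem : ∀ (n : ℕ) (φ : LST.Formula (Fin n)) (v : Fin n → ZS),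
    φ.Realize v ↔ φ.Realize (fun i => (⟨j (v i), maps (v i)⟩ : M))

/-- `j` is an elementary embedding from the class `W` into the class `M`. -/
structure ElemEmbBetween (W M : Set ZS) (j : ZS → ZS) : Prop where
  maps : ∀ x ∈ W, j x ∈ M
  elem : ∀ (n : ℕ) (φ : LST.Formula (Fin n)) (v : Fin n → W),
    φ.Realize v ↔ φ.Realize (fun i => (⟨j (v i).1, maps _ (v i).2⟩ : M))

/-- The class `M` is closed under `λ`-sequences: any (external) `λ`-indexed sequence of
elements of `M`, coded as a set of ordered pairs, belongs to `M`. -/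
def ClosedUnderSeq (M : Set ZS) (lam : Ordinal.{0}) : Prop :=
  ∀ f : ZS → ZS, (∀ α : ZS, ZOrd lam α → f α ∈ M) →
    ∀ g : ZS, (∀ p, p ∈ g ↔ ∃ α : ZS, ZOrd lam α ∧ p = α.pair (f α)) → g ∈ M

/-- `(M, j)` is (an isomorphic copy of) the ultrapower of the universe by the
ultrafilter `U` on `T ⊆ P_κ(λ)`: `j` is elementary into `M`, the seed `j[λ]`
belongs to `M` and generates `M` (every element of `M` is `j(f)(j[λ])` for an
internal function `f` on `T`), and `U` is the ultrafilter derived from `j` and `j[λ]`. -/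
structure IsUltrapowerOf (κ : Cardinal.{0}) (lam : Ordinal.{0}) (T U : ZS)
    (M : Set ZS) (j : ZS → ZS) : Prop where
  elem : ElemEmbInto M j
  seed : ∀ s : ZS, (∀ x, x ∈ s ↔ ∃ α : ZS, ZOrd lam α ∧ x = j α) →
    s ∈ M ∧ (∀ A : ZS, A ∈ U ↔ A ⊆ T ∧ s ∈ j A) ∧
    ∀ y ∈ M, ∃ f : ZS,
      (∀ p ∈ f, ∃ σ ∈ T, ∃ z : ZS, p = σ.pair z) ∧
      (∀ σ ∈ T, ∃ z : ZS, σ.pair z ∈ f) ∧ s.pair y ∈ j f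

/-- `κ` is extendible: for every `λ ≥ κ` there are `λ' > λ` and an elementary
`j : V_{λ+1} → V_{λ'+1}` fixing everything of rank below `κ` and sending (the von
Neumann ordinal) `κ` above `λ`. -/
def Extendible (κ : Ordinal.{0}) : Prop :=
  ∀ lam ≥ κ, ∃ lam' > lam, ∃ j : Vseg (lam+1) ↪ₑ[LST] Vseg (lam'+1),
    (∀ x : Vseg (lam+1), ZFSet.rank x.1 < κ → (j x).1 = x.1) ∧
    (∀ x : Vseg (lam+1), OrdZ κ x.1 → lam < ZFSet.rank (j x).1)

/-- `κ` is `γ`-extendible. -/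
def GammaExtendible (κ γ : Ordinal.{0}) : Prop :=
  ∃ γ' : Ordinal.{0}, ∃ j : Vseg (γ+1) ↪ₑ[LST] Vseg (γ'+1),
    (∀ x : Vseg (γ+1), ZFSet.rank x.1 < κ → (j x).1 = x.1) ∧
    (∀ x : Vseg (γ+1), OrdZ κ x.1 → γ < ZFSet.rank (j x).1)

/-- The `o`-th rank initial segment of a class `M`. -/
def VsegIn (M : Set ZS) (o : Ordinal.{0}) : Set ZS := {x | x ∈ M ∧ ZFSet.rank x < o}

/-- Satisfaction with one parameter in `(V_o)^N` for a class `N`. -/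
def SatInClass (N : Set ZS) (o : Ordinal.{0}) (φ : LST.Formula (Fin 1)) (a : ZS) : Prop :=
  ∃ h : a ∈ VsegIn N o, φ.Realize (fun _ => (⟨a, h⟩ : VsegIn N o))

/-- `lam` is Σ₂-correct in the class `N` (Lévy characterization relativized to `N`). -/
def Sigma2CorrectInClass (N : Set ZS) (lam : Ordinal.{0}) : Prop :=
  ∀ (φ : LST.Formula (Fin 1)) (a : ZS), a ∈ N → ZFSet.rank a < lam →
    ((∃ β, SatInClass N β φ a) ↔ (∃ β < lam, SatInClass N β φ a))

/-- `κ` is extendible over the inner model `W`: the extendibility embeddings can be chosen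
with `j ↾ V_λ^W ∈ W` and `j(V_λ^W) = V_{λ'}^W`. -/
def ExtendibleOver (W : Set ZS) (κ : Ordinal.{0}) : Prop :=
  ∀ lam ≥ κ, ∃ lam' > lam, ∃ j : Vseg (lam+1) ↪ₑ[LST] Vseg (lam'+1),
    (∀ x : Vseg (lam+1), ZFSet.rank x.1 < κ → (j x).1 = x.1) ∧
    (∀ x : Vseg (lam+1), OrdZ κ x.1 → lam < ZFSet.rank (j x).1) ∧
    (∀ r : ZS, (∀ p, p ∈ r ↔ ∃ x : Vseg (lam+1), x.1 ∈ W ∧ ZFSet.rank x.1 < lam ∧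
        p = x.1.pair (j x).1) → r ∈ W) ∧
    (∀ v : Vseg (lam+1), (∀ z, z ∈ v.1 ↔ z ∈ W ∧ ZFSet.rank z < lam) →
      ∀ z, z ∈ (j v).1 ↔ z ∈ W ∧ ZFSet.rank z < lam')

/-- `lam` is a Beth fixed point. -/
def BethFixed (lam : Ordinal.{0}) : Prop := (Cardinal.beth lam).ord = lam

/-- `p` is the powerset of `a` as computed in the class `M`. -/
def IsPowersetIn (M : Set ZS) (a p : ZS) : Prop :=
  p ∈ M ∧ ∀ x, x ∈ p ↔ x ∈ M ∧ x ⊆ a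

/-- `f` is (the graph of) a bijection from `a` onto `b`. -/
def IsBijOn (f a b : ZS) : Prop :=
  (∀ p ∈ f, ∃ x ∈ a, ∃ y ∈ b, p = x.pair y) ∧
  (∀ x ∈ a, ∃! y : ZS, x.pair y ∈ f) ∧
  (∀ y ∈ b, ∃! x : ZS, x.pair y ∈ f)

/-- `f` is (the graph of) an injection of `a` into `b`. -/
def IsInjOn (f a b : ZS) : Prop :=
  (∀ p ∈ f, ∃ x ∈ a, ∃ y ∈ b, p = x.pair y) ∧
  (∀ x ∈ a, ∃! y : ZS, x.pair y ∈ f) ∧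
  (∀ x x' y : ZS, x.pair y ∈ f → x'.pair y ∈ f → x = x')

/-- `θ` is the ordinal `(2^|a|)` as computed in `M`: the least `M`-ordinal in `M`-bijection
with the `M`-powerset of `a`. -/
def IsContinuumOfIn (M : Set ZS) (a θ : ZS) : Prop :=
  θ ∈ M ∧ θ.IsOrdinal ∧
  (∃ p f : ZS, IsPowersetIn M a p ∧ f ∈ M ∧ IsBijOn f p θ) ∧
  ∀ θ' : ZS, θ' ∈ M → θ'.IsOrdinal →
    (∃ p f : ZS, IsPowersetIn M a p ∧ f ∈ M ∧ IsBijOn f p θ') →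
    ZFSet.rank θ ≤ ZFSet.rank θ'

/-- `u` is (internally) an ultrafilter on the set `S`. -/
def IsUltraOn (S u : ZS) : Prop :=
  (∀ A ∈ u, A ⊆ S) ∧ S ∈ u ∧ (∅ : ZS) ∉ u ∧
  (∀ A ∈ u, ∀ B : ZS, B ⊆ S → A ⊆ B → B ∈ u) ∧
  (∀ A B : ZS, A ∈ u → B ∈ u → ∀ C : ZS, (∀ x, x ∈ C ↔ x ∈ A ∧ x ∈ B) → C ∈ u) ∧
  (∀ A : ZS, A ⊆ S → A ∉ u → ∀ B : ZS, (∀ x, x ∈ B ↔ x ∈ S ∧ x ∉ A) → B ∈ u)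



/-! ### Von Neumann ordinals for each Lean ordinal -/

open ZFSet in
/-- The von Neumann ordinal of (Lean) ordinal `o`. -/
noncomputable def vN : Ordinal.{0} → ZS :=
  Ordinal.lt_wf.fix fun o ih =>
    ZFSet.range fun i : o.ToType =>
      ih ((Ordinal.ToType.mk (o := o)).symm i).1 ((Ordinal.ToType.mk (o := o)).symm i).2

theorem vN_def (o : Ordinal.{0}) :
    vN o = ZFSet.range fun i : o.ToType => vN ((Ordinal.ToType.mk (o := o)).symm i).1 :=
  Ordinal.lt_wf.fix_eq _ o

theorem mem_vN {x : ZS} {o : Ordinal.{0}} : x ∈ vN o ↔ ∃ i < o, x = vN i := by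
  rw [vN_def, ZFSet.mem_range]
  constructor
  · rintro ⟨i, rfl⟩
    exact ⟨_, ((Ordinal.ToType.mk (o := o)).symm i).2, rfl⟩
  · rintro ⟨i, hi, rfl⟩
    exact ⟨(Ordinal.ToType.mk (o := o)) ⟨i, hi⟩, by simp⟩

theorem vN_mem_vN {i o : Ordinal.{0}} (h : i < o) : vN i ∈ vN o :=
  mem_vN.2 ⟨i, h, rfl⟩

theorem rank_vN (o : Ordinal.{0}) : ZFSet.rank (vN o) = o := by
  induction o using Ordinal.induction with
  | h o ih =>
    apply le_antisymm
    · rw [ZFSet.rank_le_iff]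
      intro y hy
      obtain ⟨i, hi, rfl⟩ := mem_vN.1 hy
      rwa [ih i hi]
    · by_contra h
      push_neg at h
      have h2 := ZFSet.rank_lt_of_mem (vN_mem_vN h)
      rw [ih _ h] at h2
      exact lt_irrefl _ h2

theorem vN_injective : Function.Injective vN := fun a b h => by
  rw [← rank_vN a, ← rank_vN b, h]

theorem isOrdinal_vN (o : Ordinal.{0}) : ZFSet.IsOrdinal (vN o) := by
  constructor
  · intro y hy z hz
    obtain ⟨i, hi, rfl⟩ := mem_vN.1 hy
    obtain ⟨k, hk, rfl⟩ := mem_vN.1 hz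
    exact vN_mem_vN (hk.trans hi)
  · intro y z w hyz hzw hw
    obtain ⟨i, hi, rfl⟩ := mem_vN.1 hw
    obtain ⟨k, hk, rfl⟩ := mem_vN.1 hzw
    obtain ⟨l, hl, rfl⟩ := mem_vN.1 hyz
    exact vN_mem_vN (hl.trans hk)

theorem ZFSet.IsOrdinal.mem' {x y : ZS} (hx : x.IsOrdinal) (hy : y ∈ x) : y.IsOrdinal := by
  constructor
  · intro a ha b hb
    exact hx.mem_trans' hb ha hy
  · intro a b c hab hbc hcy
    exact hx.mem_trans' hab hbc (hx.isTransitive.mem_trans hcy hy)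

theorem eq_vN_rank {x : ZS} (hx : x.IsOrdinal) : x = vN (ZFSet.rank x) := by
  generalize ho : ZFSet.rank x = o
  induction o using Ordinal.induction generalizing x with
  | h o ih =>
    subst ho
    apply ZFSet.ext
    intro y
    constructor
    · intro hy
      have hyo := hx.mem' hy
      have : y = vN (ZFSet.rank y) := ih _ (ZFSet.rank_lt_of_mem hy) hyo rfl
      rw [this]
      exact vN_mem_vN (ZFSet.rank_lt_of_mem hy)
    · intro hy
      obtain ⟨i, hi, rfl⟩ := mem_vN.1 hy
      obtain ⟨z, hz, hiz⟩ := ZFSet.lt_rank_iff.1 hi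
      have hzvN : z = vN (ZFSet.rank z) := ih _ (ZFSet.rank_lt_of_mem hz) (hx.mem' hz) rfl
      rcases eq_or_lt_of_le hiz with h | h
      · rw [h]; rwa [← hzvN]
      · exact hx.isTransitive.mem_trans (hzvN ▸ vN_mem_vN h) hz

/-- members of `Vseg` are downward closed. -/
theorem Vseg_trans {o : Ordinal.{0}} {x y : ZS} (hx : x ∈ Vseg o) (hyx : y ∈ x) : y ∈ Vseg o :=
  lt_trans (ZFSet.rank_lt_of_mem hyx) hx

theorem ZFSet.mem_toSet (a u : ZFSet.{0}) : a ∈ u.toSet ↔ a ∈ u := Iff.rfl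

theorem mk_toSet_vN (o : Ordinal.{0}) :
    Cardinal.mk (vN o).toSet = Cardinal.lift.{1} o.card := by
  rw [← Ordinal.mk_Iio_ordinal]
  apply Cardinal.mk_congr
  refine ⟨fun x => ⟨ZFSet.rank x.1, ?_⟩, fun i => ⟨vN i.1, vN_mem_vN i.2⟩, ?_, ?_⟩
  · have := x.2
    rw [ZFSet.mem_toSet] at this
    have := ZFSet.rank_lt_of_mem this
    rwa [rank_vN] at this
  · rintro ⟨x, hx⟩
    rw [ZFSet.mem_toSet] at hx
    obtain ⟨i, hi, rfl⟩ := mem_vN.1 hx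
    simp [rank_vN]
  · rintro ⟨i, hi⟩
    simp [rank_vN]
/-! ### Formula toolkit -/

def mRel : LST.Relations 2 := PUnit.unit

/-- membership atom -/
def memF {α : Type} (X Y : α) : LST.Formula α :=
  mRel.formula₂ (FirstOrder.Language.Term.var X) (FirstOrder.Language.Term.var Y)

/-- equality atom -/
def eqF {α : Type} (X Y : α) : LST.Formula α :=
  FirstOrder.Language.Term.equal (FirstOrder.Language.Term.var X) (FirstOrder.Language.Term.var Y)

@[simp] theorem realize_memF {o : Ordinal.{0}} {α : Type} (X Y : α) (v : α → Vseg o) :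
    (memF X Y).Realize v ↔ (v X).1 ∈ (v Y).1 := by
  rw [memF, FirstOrder.Language.Formula.realize_rel₂]
  exact Iff.rfl

@[simp] theorem realize_eqF {o : Ordinal.{0}} {α : Type} (X Y : α) (v : α → Vseg o) :
    (eqF X Y).Realize v ↔ (v X).1 = (v Y).1 := by
  rw [eqF, FirstOrder.Language.Formula.realize_equal]
  simp [Subtype.ext_iff]
open FirstOrder.Language in
/-- `x₀` is an ordinal (Δ₀). -/
noncomputable def ordF : LST.Formula (Fin 1) :=
  Formula.iAlls (Fin 3)
    ((((memF (Sum.inr 2) (Sum.inr 1)) ⊓ (memF (Sum.inr 1) (Sum.inl 0))) ⟹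
        memF (Sum.inr 2) (Sum.inl 0)) ⊓
     (((memF (Sum.inr 0) (Sum.inl 0)) ⊓ (memF (Sum.inr 1) (Sum.inr 0)) ⊓
        (memF (Sum.inr 2) (Sum.inr 1))) ⟹ memF (Sum.inr 2) (Sum.inr 0)))

theorem realize_ordF {o : Ordinal.{0}} (x : Vseg o) :
    ordF.Realize (fun _ : Fin 1 => x) ↔ ZFSet.IsOrdinal x.1 := by
  rw [ordF, FirstOrder.Language.Formula.realize_iAlls]
  simp only [FirstOrder.Language.Formula.realize_imp, FirstOrder.Language.Formula.realize_inf,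
    realize_memF, id_eq, Sum.elim_inl, Sum.elim_inr]
  constructor
  · intro h
    constructor
    · intro y hy z hz
      exact (h ![x, ⟨y, Vseg_trans x.2 hy⟩, ⟨z, Vseg_trans (Vseg_trans x.2 hy) hz⟩]).1 ⟨hz, hy⟩
    · intro y z w hyz hzw hwx
      have hw : w ∈ Vseg o := Vseg_trans x.2 hwx
      have hz : z ∈ Vseg o := Vseg_trans hw hzw
      have hy : y ∈ Vseg o := Vseg_trans hz hyz
      exact (h ![⟨w, hw⟩, ⟨z, hz⟩, ⟨y, hy⟩]).2 ⟨⟨hwx, hzw⟩, hyz⟩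
  · intro h i
    constructor
    · rintro ⟨h1, h2⟩
      exact h.isTransitive.mem_trans h1 h2
    · rintro ⟨⟨h1, h2⟩, h3⟩
      exact h.mem_trans' h3 h2 h1
open FirstOrder.Language in
/-- `x₀` is nonempty and has no maximal element (Δ₀). -/
noncomputable def limitF : LST.Formula (Fin 1) :=
  (Formula.iExs (Fin 1) (memF (Sum.inr 0) (Sum.inl 0))) ⊓
  (Formula.iAlls (Fin 1)
    ((memF (Sum.inr 0) (Sum.inl 0)) ⟹
      Formula.iExs (Fin 1)
        ((memF (Sum.inr 0) (Sum.inl (Sum.inl 0))) ⊓ (memF (Sum.inl (Sum.inr 0)) (Sum.inr 0)))))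

theorem realize_limitF {o : Ordinal.{0}} (x : Vseg o) :
    limitF.Realize (fun _ : Fin 1 => x) ↔
      ((∃ y, y ∈ x.1) ∧ ∀ y ∈ x.1, ∃ z ∈ x.1, y ∈ z) := by
  rw [limitF]
  simp only [FirstOrder.Language.Formula.realize_inf, FirstOrder.Language.Formula.realize_iExs,
    FirstOrder.Language.Formula.realize_iAlls, FirstOrder.Language.Formula.realize_imp,
    realize_memF, id_eq, Sum.elim_inl, Sum.elim_inr]
  constructor
  · rintro ⟨⟨i, hi⟩, h2⟩
    refine ⟨⟨_, hi⟩, fun y hy => ?_⟩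
    obtain ⟨i', hi'⟩ := h2 ![⟨y, Vseg_trans x.2 hy⟩] hy
    exact ⟨(i' 0).1, hi'.1, hi'.2⟩
  · rintro ⟨⟨y, hy⟩, h2⟩
    refine ⟨⟨![⟨y, Vseg_trans x.2 hy⟩], hy⟩, fun i hi => ?_⟩
    obtain ⟨z, hz, hyz⟩ := h2 (i 0).1 hi
    exact ⟨![⟨z, Vseg_trans x.2 hz⟩], hz, hyz⟩

open FirstOrder.Language in
/-- there exists a set containing `x₀`. -/
noncomputable def exF : LST.Formula (Fin 1) :=
  Formula.iExs (Fin 1) (memF (Sum.inl 0) (Sum.inr 0))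

theorem realize_exF {o : Ordinal.{0}} (x : Vseg o) :
    exF.Realize (fun _ : Fin 1 => x) ↔ ∃ y ∈ Vseg o, x.1 ∈ y := by
  rw [exF]
  simp only [FirstOrder.Language.Formula.realize_iExs, realize_memF, id_eq, Sum.elim_inl,
    Sum.elim_inr]
  constructor
  · rintro ⟨i, hi⟩
    exact ⟨(i 0).1, (i 0).2, hi⟩
  · rintro ⟨y, hy, hxy⟩
    exact ⟨![⟨y, hy⟩], hxy⟩

open FirstOrder.Language in
/-- `x₀` is empty. -/
noncomputable def emptyF : LST.Formula (Fin 1) :=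
  Formula.iAlls (Fin 1) (memF (Sum.inr 0) (Sum.inl 0)).not

theorem realize_emptyF {o : Ordinal.{0}} (x : Vseg o) :
    emptyF.Realize (fun _ : Fin 1 => x) ↔ x.1 = ∅ := by
  rw [emptyF]
  simp only [FirstOrder.Language.Formula.realize_iAlls, FirstOrder.Language.Formula.realize_not,
    realize_memF, id_eq, Sum.elim_inl, Sum.elim_inr]
  constructor
  · intro h
    apply ZFSet.ext
    intro y
    simp only [ZFSet.notMem_empty, iff_false]
    intro hy
    exact h ![⟨y, Vseg_trans x.2 hy⟩] hy
  · intro h i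
    rw [h]
    exact ZFSet.notMem_empty _

open FirstOrder.Language in
/-- `x₀ = x₁ ∪ {x₁}`. -/
noncomputable def succF : LST.Formula (Fin 2) :=
  Formula.iAlls (Fin 1)
    ((memF (Sum.inr 0) (Sum.inl 0)).iff
      ((memF (Sum.inr 0) (Sum.inl 1)) ⊔ (eqF (Sum.inr 0) (Sum.inl 1))))

theorem realize_succF {o : Ordinal.{0}} (x y : Vseg o) :
    succF.Realize ![x, y] ↔ ∀ z ∈ Vseg o, (z ∈ x.1 ↔ z ∈ y.1 ∨ z = y.1) := by
  rw [succF]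
  simp only [FirstOrder.Language.Formula.realize_iAlls, FirstOrder.Language.Formula.realize_iff,
    FirstOrder.Language.Formula.realize_sup, realize_memF, realize_eqF, id_eq, Sum.elim_inl,
    Sum.elim_inr]
  constructor
  · intro h z hz
    exact h ![⟨z, hz⟩]
  · intro h i
    exact h (i 0).1 (i 0).2
open FirstOrder.Language in
/-- `x_Q = {x_X}` as a formula. -/
noncomputable def singF {α : Type} (Q X : α) : LST.Formula α :=
  Formula.iAlls (Fin 1)
    ((memF (Sum.inr 0) (Sum.inl Q)).iff (eqF (Sum.inr 0) (Sum.inl X)))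

theorem realize_singF {o : Ordinal.{0}} {α : Type} (Q X : α) (v : α → Vseg o) :
    (singF Q X).Realize v ↔ (v Q).1 = ({(v X).1} : ZS) := by
  rw [singF]
  simp only [FirstOrder.Language.Formula.realize_iAlls, FirstOrder.Language.Formula.realize_iff,
    realize_memF, realize_eqF, id_eq, Sum.elim_inl, Sum.elim_inr]
  constructor
  · intro h
    apply ZFSet.ext
    intro r
    rw [ZFSet.mem_singleton]
    constructor
    · intro hr
      exact (h ![⟨r, Vseg_trans (v Q).2 hr⟩]).1 hr
    · rintro rfl
      exact (h ![v X]).2 rfl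
  · intro h i
    rw [h, ZFSet.mem_singleton]

open FirstOrder.Language in
/-- `x_Q = {x_X, x_Y}` as a formula. -/
noncomputable def doubF {α : Type} (Q X Y : α) : LST.Formula α :=
  Formula.iAlls (Fin 1)
    ((memF (Sum.inr 0) (Sum.inl Q)).iff
      ((eqF (Sum.inr 0) (Sum.inl X)) ⊔ (eqF (Sum.inr 0) (Sum.inl Y))))

theorem realize_doubF {o : Ordinal.{0}} {α : Type} (Q X Y : α) (v : α → Vseg o) :
    (doubF Q X Y).Realize v ↔ (v Q).1 = ({(v X).1, (v Y).1} : ZS) := by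
  rw [doubF]
  simp only [FirstOrder.Language.Formula.realize_iAlls, FirstOrder.Language.Formula.realize_iff,
    FirstOrder.Language.Formula.realize_sup, realize_memF, realize_eqF, id_eq, Sum.elim_inl,
    Sum.elim_inr]
  constructor
  · intro h
    apply ZFSet.ext
    intro r
    rw [ZFSet.mem_pair]
    constructor
    · intro hr
      exact (h ![⟨r, Vseg_trans (v Q).2 hr⟩]).1 hr
    · rintro (rfl | rfl)
      · exact (h ![v X]).2 (Or.inl rfl)
      · exact (h ![v Y]).2 (Or.inr rfl)
  · intro h i
    rw [h, ZFSet.mem_pair]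

open FirstOrder.Language in
/-- `x_P = pair x_X x_Y` (Kuratowski) as a formula. -/
noncomputable def pairF {α : Type} (P X Y : α) : LST.Formula α :=
  Formula.iAlls (Fin 1)
    ((memF (Sum.inr 0) (Sum.inl P)).iff
      ((singF (Sum.inr 0) (Sum.inl X)) ⊔ (doubF (Sum.inr 0) (Sum.inl X) (Sum.inl Y))))

theorem realize_pairF' {o : Ordinal.{0}} {α : Type} (P X Y : α) (v : α → Vseg o) :
    (pairF P X Y).Realize v ↔
      ∀ q ∈ Vseg o, (q ∈ (v P).1 ↔ q = ({(v X).1} : ZS) ∨ q = ({(v X).1, (v Y).1} : ZS)) := by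
  rw [pairF]
  simp only [FirstOrder.Language.Formula.realize_iAlls, FirstOrder.Language.Formula.realize_iff,
    FirstOrder.Language.Formula.realize_sup, realize_memF, realize_singF, realize_doubF, id_eq,
    Sum.elim_inl, Sum.elim_inr]
  constructor
  · intro h q hq
    exact h ![⟨q, hq⟩]
  · intro h i
    exact h (i 0).1 (i 0).2

theorem realize_pairF {o : Ordinal.{0}} {α : Type} (P X Y : α) (v : α → Vseg o)
    (h1 : ({(v X).1} : ZS) ∈ Vseg o) (h2 : ({(v X).1, (v Y).1} : ZS) ∈ Vseg o) :
    (pairF P X Y).Realize v ↔ (v P).1 = ZFSet.pair (v X).1 (v Y).1 := by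
  rw [realize_pairF']
  constructor
  · intro h
    apply ZFSet.ext
    intro q
    rw [ZFSet.pair, ZFSet.mem_pair]
    constructor
    · intro hq
      exact (h q (Vseg_trans (v P).2 hq)).1 hq
    · rintro (rfl | rfl)
      · exact (h _ h1).2 (Or.inl rfl)
      · exact (h _ h2).2 (Or.inr rfl)
  · intro h q hq
    rw [h, ZFSet.pair, ZFSet.mem_pair]
theorem sing_mem_Vseg {o : Ordinal.{0}} {x b : ZS} (hx : x ∈ b) (hb : b ∈ Vseg o) :
    ({x} : ZS) ∈ Vseg o := by
  have : ZFSet.rank ({x} : ZS) ≤ ZFSet.rank b := by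
    rw [ZFSet.rank_singleton, Order.succ_le_iff]
    exact ZFSet.rank_lt_of_mem hx
  exact lt_of_le_of_lt this hb

theorem doub_mem_Vseg {o : Ordinal.{0}} {x y b k : ZS} (hx : x ∈ b) (hy : y ∈ k)
    (hb : b ∈ Vseg o) (hk : k ∈ Vseg o) : ({x, y} : ZS) ∈ Vseg o := by
  have : ZFSet.rank ({x, y} : ZS) < o := by
    rw [ZFSet.rank_pair]
    exact max_lt (lt_of_le_of_lt (Order.succ_le_iff.2 (ZFSet.rank_lt_of_mem hx)) hb)
      (lt_of_le_of_lt (Order.succ_le_iff.2 (ZFSet.rank_lt_of_mem hy)) hk)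
  exact this

/-- The ZS-level "surjective partial function pattern from `b` onto `k`". -/
def SurjPat (f b k : ZS) : Prop :=
  (∀ x ∈ b, ∀ y ∈ k, ∀ y' ∈ k, ZFSet.pair x y ∈ f → ZFSet.pair x y' ∈ f → y = y') ∧
  (∀ y ∈ k, ∃ x ∈ b, ZFSet.pair x y ∈ f)

open FirstOrder.Language in
/-- `x₀` is a surjective-function pattern from `x₁` onto `x₂`. -/
noncomputable def surjF : LST.Formula (Fin 3) :=
  (Formula.iAlls (Fin 5)
    (((memF (Sum.inr 0) (Sum.inl 1)) ⊓ (memF (Sum.inr 1) (Sum.inl 2)) ⊓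
      (memF (Sum.inr 2) (Sum.inl 2)) ⊓ (memF (Sum.inr 3) (Sum.inl 0)) ⊓
      (memF (Sum.inr 4) (Sum.inl 0)) ⊓ (pairF (Sum.inr 3) (Sum.inr 0) (Sum.inr 1)) ⊓
      (pairF (Sum.inr 4) (Sum.inr 0) (Sum.inr 2))) ⟹ eqF (Sum.inr 1) (Sum.inr 2))) ⊓
  (Formula.iAlls (Fin 1)
    ((memF (Sum.inr 0) (Sum.inl 2)) ⟹
      Formula.iExs (Fin 2)
        ((memF (Sum.inr 0) (Sum.inl (Sum.inl 1))) ⊓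
         (memF (Sum.inr 1) (Sum.inl (Sum.inl 0))) ⊓
         (pairF (Sum.inr 1) (Sum.inr 0) (Sum.inl (Sum.inr 0))))))

theorem realize_surjF {o : Ordinal.{0}} (f b k : Vseg o) :
    surjF.Realize ![f, b, k] ↔ SurjPat f.1 b.1 k.1 := by
  rw [surjF]
  simp only [FirstOrder.Language.Formula.realize_inf, FirstOrder.Language.Formula.realize_iAlls,
    FirstOrder.Language.Formula.realize_iExs, FirstOrder.Language.Formula.realize_imp,
    realize_memF, realize_eqF, id_eq, Sum.elim_inl, Sum.elim_inr]
  constructor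
  · rintro ⟨h2, h3⟩
    constructor
    · intro x hx y hy y' hy' hp hp'
      refine h2 ![⟨x, Vseg_trans b.2 hx⟩, ⟨y, Vseg_trans k.2 hy⟩, ⟨y', Vseg_trans k.2 hy'⟩,
        ⟨ZFSet.pair x y, Vseg_trans f.2 hp⟩, ⟨ZFSet.pair x y', Vseg_trans f.2 hp'⟩]
        ⟨⟨⟨⟨⟨⟨hx, hy⟩, hy'⟩, hp⟩, hp'⟩, ?_⟩, ?_⟩
      · exact (realize_pairF _ _ _ _ (sing_mem_Vseg hx b.2)
          (doub_mem_Vseg hx hy b.2 k.2)).2 rfl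
      · exact (realize_pairF _ _ _ _ (sing_mem_Vseg hx b.2)
          (doub_mem_Vseg hx hy' b.2 k.2)).2 rfl
    · intro y hy
      obtain ⟨i, ⟨hxb, hpf⟩, hpair⟩ := h3 ![⟨y, Vseg_trans k.2 hy⟩] hy
      have e1' := (realize_pairF (Sum.inr 1) (Sum.inr 0) (Sum.inl (Sum.inr 0))
        (fun a => Sum.elim (fun a' => Sum.elim (![f, b, k] : Fin 3 → Vseg o)
          (![⟨y, Vseg_trans k.2 hy⟩] : Fin 1 → Vseg o) a') i a)
        (sing_mem_Vseg hxb b.2) (doub_mem_Vseg hxb hy b.2 k.2)).1 hpair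
      have e1 : (i 1).1 = ZFSet.pair (i 0).1 y := e1'
      exact ⟨(i 0).1, hxb, e1 ▸ hpf⟩
  · rintro ⟨h2, h3⟩
    constructor
    · rintro i ⟨⟨⟨⟨⟨⟨hx, hy⟩, hy'⟩, hp⟩, hp'⟩, hpair⟩, hpair'⟩
      have e1' := (realize_pairF (Sum.inr 3) (Sum.inr 0) (Sum.inr 1)
        (fun a => Sum.elim (![f, b, k] : Fin 3 → Vseg o) i a)
        (sing_mem_Vseg hx b.2) (doub_mem_Vseg hx hy b.2 k.2)).1 hpair
      have e2' := (realize_pairF (Sum.inr 4) (Sum.inr 0) (Sum.inr 2)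
        (fun a => Sum.elim (![f, b, k] : Fin 3 → Vseg o) i a)
        (sing_mem_Vseg hx b.2) (doub_mem_Vseg hx hy' b.2 k.2)).1 hpair'
      have e1 : (i 3).1 = ZFSet.pair (i 0).1 (i 1).1 := e1'
      have e2 : (i 4).1 = ZFSet.pair (i 0).1 (i 2).1 := e2'
      exact h2 _ hx _ hy _ hy' (e1 ▸ hp) (e2 ▸ hp')
    · intro i hi
      obtain ⟨x, hx, hpf⟩ := h3 (i 0).1 hi
      refine ⟨![⟨x, Vseg_trans b.2 hx⟩, ⟨ZFSet.pair x (i 0).1, Vseg_trans f.2 hpf⟩],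
        ⟨hx, hpf⟩, ?_⟩
      refine (realize_pairF _ _ _ _ ?_ ?_).2 ?_
      · exact sing_mem_Vseg hx b.2
      · exact doub_mem_Vseg hx hi b.2 k.2
      · rfl
open FirstOrder.Language in
/-- "`x₀` is a cardinal": no element of `x₀` maps onto `x₀`. -/
noncomputable def cardFml : LST.Formula (Fin 1) :=
  Formula.iAlls (Fin 2)
    ((memF (Sum.inr 0) (Sum.inl 0)) ⟹
      (surjF.relabel (![Sum.inr 1, Sum.inr 0, Sum.inl 0] : Fin 3 → Fin 1 ⊕ Fin 2)).not)

theorem realize_cardFml {o : Ordinal.{0}} (k : Vseg o) :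
    cardFml.Realize (fun _ : Fin 1 => k) ↔
      ∀ b ∈ Vseg o, ∀ f ∈ Vseg o, b ∈ k.1 → ¬ SurjPat f b k.1 := by
  rw [cardFml]
  simp only [FirstOrder.Language.Formula.realize_iAlls, FirstOrder.Language.Formula.realize_imp,
    FirstOrder.Language.Formula.realize_not, FirstOrder.Language.Formula.realize_relabel,
    realize_memF, id_eq, Sum.elim_inl, Sum.elim_inr]
  constructor
  · intro h b hb f hf hbk hsp
    apply h ![⟨b, hb⟩, ⟨f, hf⟩] hbk
    have := (realize_surjF (⟨f, hf⟩ : Vseg o) ⟨b, hb⟩ k).2 hsp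
    convert this using 2
    funext a
    fin_cases a <;> rfl
  · intro h i hbk hsp
    refine h (i 0).1 (i 0).2 (i 1).1 (i 1).2 hbk ?_
    refine (realize_surjF (i 1) (i 0) k).1 ?_
    convert hsp using 2
    funext a
    fin_cases a <;> rfl
theorem rank_pairK (x y : ZS) :
    ZFSet.rank (ZFSet.pair x y) =
      Order.succ (Order.succ (max (ZFSet.rank x) (ZFSet.rank y))) := by
  rw [ZFSet.pair, ZFSet.rank_pair, ZFSet.rank_singleton, ZFSet.rank_pair]
  rcases le_total (ZFSet.rank x) (ZFSet.rank y) with h | h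
  · rw [max_eq_right h, max_eq_right (Order.succ_le_succ h),
      max_eq_right (Order.succ_le_succ (Order.succ_le_succ h))]
  · rw [max_eq_left h, max_eq_left (Order.succ_le_succ h), max_self]

theorem SurjPat.mk_le {f b k : ZS} (h : SurjPat f b k) :
    Cardinal.mk k.toSet ≤ Cardinal.mk b.toSet := by
  obtain ⟨h2, h3⟩ := h
  have hch : ∀ y : k.toSet, ∃ x : b.toSet, ZFSet.pair x.1 y.1 ∈ f := by
    rintro ⟨y, hy⟩
    rw [ZFSet.mem_toSet] at hy
    obtain ⟨x, hx, hp⟩ := h3 y hy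
    exact ⟨⟨x, (ZFSet.mem_toSet _ _).2 hx⟩, hp⟩
  choose F hF using hch
  apply Cardinal.mk_le_of_injective (f := F)
  rintro ⟨y, hy⟩ ⟨y', hy'⟩ hFe
  have h1 := hF ⟨y, hy⟩
  have h1' := hF ⟨y', hy'⟩
  rw [hFe] at h1
  have hxb := (F ⟨y', hy'⟩).2
  rw [ZFSet.mem_toSet] at hxb hy hy'
  exact Subtype.ext (h2 _ hxb _ hy _ hy' h1 h1')

/-- the graph `{(vN α, vN (G α)) : α < o₁}` as a `ZFSet`. -/
noncomputable def graphZ (o₁ : Ordinal.{0}) {o₂ : Ordinal.{0}} (G : Set.Iio o₁ → Set.Iio o₂) :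
    ZS :=
  ZFSet.range fun i : o₁.ToType =>
    ZFSet.pair (vN ((Ordinal.ToType.mk (o := o₁)).symm i).1)
      (vN (G ((Ordinal.ToType.mk (o := o₁)).symm i)).1)

theorem mem_graphZ {o₁ o₂ : Ordinal.{0}} (G : Set.Iio o₁ → Set.Iio o₂) {p : ZS} :
    p ∈ graphZ o₁ G ↔ ∃ α : Set.Iio o₁, p = ZFSet.pair (vN α.1) (vN (G α).1) := by
  rw [graphZ, ZFSet.mem_range]
  constructor
  · rintro ⟨i, rfl⟩
    exact ⟨_, rfl⟩
  · rintro ⟨α, rfl⟩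
    exact ⟨(Ordinal.ToType.mk (o := o₁)) α, by simp⟩

theorem rank_graphZ_le {o₁ o₂ : Ordinal.{0}} (G : Set.Iio o₁ → Set.Iio o₂) :
    ZFSet.rank (graphZ o₁ G) ≤ max o₁ o₂ + 2 := by
  rw [ZFSet.rank_le_iff]
  intro p hp
  obtain ⟨α, rfl⟩ := (mem_graphZ G).1 hp
  rw [rank_pairK, rank_vN, rank_vN]
  have hm : max α.1 (G α).1 < max o₁ o₂ :=
    max_lt (lt_of_lt_of_le α.2 (le_max_left _ _)) (lt_of_lt_of_le (G α).2 (le_max_right _ _))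
  calc Order.succ (Order.succ (max α.1 (G α).1))
      ≤ Order.succ (max o₁ o₂) := Order.succ_le_succ (Order.succ_le_of_lt hm)
    _ = max o₁ o₂ + 1 := (Ordinal.add_one_eq_succ _).symm
    _ < max o₁ o₂ + 2 := by
        rw [show (2 : Ordinal.{0}) = 1 + 1 from (one_add_one_eq_two).symm]
        rw [← add_assoc]
        exact lt_of_lt_of_le (by
          rw [Ordinal.add_one_eq_succ]
          exact Order.lt_succ _) (le_refl _)
    _ ≤ max o₁ o₂ + 2 := le_refl _

theorem surjPat_graphZ {o₁ o₂ : Ordinal.{0}} (G : Set.Iio o₁ → Set.Iio o₂)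
    (hG : Function.Surjective G) : SurjPat (graphZ o₁ G) (vN o₁) (vN o₂) := by
  constructor
  · intro x _ y _ y' _ hp hp'
    obtain ⟨α, hα⟩ := (mem_graphZ G).1 hp
    obtain ⟨α', hα'⟩ := (mem_graphZ G).1 hp'
    obtain ⟨e1, e2⟩ := ZFSet.pair_inj.1 hα
    obtain ⟨e1', e2'⟩ := ZFSet.pair_inj.1 hα'
    have : α = α' := Subtype.ext (vN_injective (e1.symm.trans e1'))
    rw [e2, e2', this]
  · intro y hy
    obtain ⟨c, hc, rfl⟩ := mem_vN.1 hy
    obtain ⟨α, hα⟩ := hG ⟨c, hc⟩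
    refine ⟨vN α.1, vN_mem_vN α.2, ?_⟩
    apply (mem_graphZ G).2 ⟨α, ?_⟩
    rw [hα]
section Transfer

open FirstOrder.Language

variable {o₁ o₂ : Ordinal.{0}} (j : Vseg o₁ ↪ₑ[LST] Vseg o₂)

theorem jmem {a b : Vseg o₁} (h : a.1 ∈ b.1) : (j a).1 ∈ (j b).1 := by
  have h2 := j.map_formula (memF (0 : Fin 2) 1) ![a, b]
  rw [realize_memF, realize_memF] at h2
  exact h2.2 h

theorem jord {a : Vseg o₁} (h : ZFSet.IsOrdinal a.1) : ZFSet.IsOrdinal (j a).1 := by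
  have h2 := j.map_formula ordF (fun _ => a)
  rw [realize_ordF] at h2
  have h3 : ordF.Realize (fun _ : Fin 1 => j a) ↔ ZFSet.IsOrdinal (j a).1 := realize_ordF _
  exact h3.1 (h2.2 h)

theorem jempty {a : Vseg o₁} (h : a.1 = ∅) : (j a).1 = ∅ := by
  have h2 := j.map_formula emptyF (fun _ => a)
  rw [realize_emptyF] at h2
  have h3 : emptyF.Realize (fun _ : Fin 1 => j a) ↔ (j a).1 = ∅ := realize_emptyF _
  exact h3.1 (h2.2 h)

theorem jlimit {a : Vseg o₁} (h : (∃ y, y ∈ a.1) ∧ ∀ y ∈ a.1, ∃ z ∈ a.1, y ∈ z) :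
    (∃ y, y ∈ (j a).1) ∧ ∀ y ∈ (j a).1, ∃ z ∈ (j a).1, y ∈ z := by
  have h2 := j.map_formula limitF (fun _ => a)
  rw [realize_limitF] at h2
  have h3 := realize_limitF (j a)
  exact h3.1 (h2.2 h)

theorem jsucc {a b : Vseg o₁} (h : ∀ z ∈ Vseg o₁, (z ∈ a.1 ↔ z ∈ b.1 ∨ z = b.1)) :
    ∀ z ∈ Vseg o₂, (z ∈ (j a).1 ↔ z ∈ (j b).1 ∨ z = (j b).1) := by
  have h2 := j.map_formula succF ![a, b]
  rw [realize_succF] at h2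
  have h3 : succF.Realize ![j a, j b] ↔
      ∀ z ∈ Vseg o₂, (z ∈ (j a).1 ↔ z ∈ (j b).1 ∨ z = (j b).1) := realize_succF _ _
  have he : (⇑j ∘ ![a, b]) = ![j a, j b] := by
    funext i; fin_cases i <;> rfl
  rw [he] at h2
  exact h3.1 (h2.2 h)

theorem jsurj {f b k : Vseg o₁} (h : SurjPat f.1 b.1 k.1) :
    SurjPat (j f).1 (j b).1 (j k).1 := by
  have h2 := j.map_formula surjF ![f, b, k]
  have he : (⇑j ∘ ![f, b, k]) = ![j f, j b, j k] := by
    funext i; fin_cases i <;> rfl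
  rw [he, realize_surjF, realize_surjF] at h2
  exact h2.2 h

theorem jcard {a : Vseg o₁} (h : ∀ b ∈ Vseg o₁, ∀ f ∈ Vseg o₁, b ∈ a.1 → ¬ SurjPat f b a.1) :
    ∀ b ∈ Vseg o₂, ∀ f ∈ Vseg o₂, b ∈ (j a).1 → ¬ SurjPat f b (j a).1 := by
  have h2 := j.map_formula cardFml (fun _ => a)
  rw [realize_cardFml] at h2
  have h3 := realize_cardFml (j a)
  exact h3.1 (h2.2 h)

end Transfer

/-- if `κ` is extendible, `λ > κ` is a Σ₂-correct cardinal, and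
`j : V_{λ+1} → V_{λ'+1}` is elementary with critical point `κ` and `j(κ) > λ`, then
`j[λ]` has order type `λ`, `λ` is Σ₂-correct in `V_{j(κ)}`, and hence
`j[λ] ∈ T_{j(κ), j(λ)}`. -/
theorem stmt_4 (κ : Ordinal.{0}) (lam : Cardinal.{0}) (lam' : Ordinal.{0})
    (hext : Extendible κ) (hκlam : κ < lam.ord) (hcor : Sigma2Correct lam.ord)
    (j : Vseg (lam.ord+1) ↪ₑ[LST] Vseg (lam'+1))
    (hfix : ∀ x : Vseg (lam.ord+1), ZFSet.rank x.1 < κ → (j x).1 = x.1)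
    (hmove : ∀ x : Vseg (lam.ord+1), OrdZ κ x.1 → lam.ord < ZFSet.rank (j x).1)
    (s : ZS)
    (hs : ∀ x : ZS, x ∈ s ↔ ∃ a : Vseg (lam.ord+1), ZOrd lam.ord a.1 ∧ x = (j a).1) :
    HasOtype s lam.ord ∧
    ∀ kZ : Vseg (lam.ord+1), OrdZ κ kZ.1 →
      Sigma2CorrectIn lam.ord (ZFSet.rank (j kZ).1) ∧
      ∀ lamZ : Vseg (lam.ord+1), OrdZ lam.ord lamZ.1 →
        memT (ZFSet.rank (j kZ).1).card (ZFSet.rank (j lamZ).1) s := by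
  classical
  -- ordinal arithmetic helpers
  have two_eq : ∀ o : Ordinal.{0}, o + 2 = (o + 1) + 1 := fun o => by
    rw [add_assoc, one_add_one_eq_two]
  have lt_add_one' : ∀ o : Ordinal.{0}, o < o + 1 := fun o => by
    rw [Ordinal.add_one_eq_succ]; exact Order.lt_succ o
  have succ_le' : ∀ {a b : Ordinal.{0}}, a < b → a + 1 ≤ b := fun {a b} h => by
    rw [Ordinal.add_one_eq_succ]; exact Order.succ_le_of_lt h
  have hΛsucc : lam.ord < lam.ord + 1 := lt_add_one' _
  have hΛpos : 0 < lam.ord := lt_of_le_of_lt (zero_le (a := κ)) hκlam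
  -- Step L1: lam.ord is closed under +2 (hence a limit)
  have hstep : ∀ β < lam.ord, β + 2 < lam.ord := by
    intro β hβ
    have h1 : SatIn (β + 2) exF (vN β) := by
      refine ⟨by rw [rank_vN]; exact lt_trans (lt_add_one' β) (by rw [two_eq]; exact lt_add_one' _), ?_⟩
      refine (realize_exF _).2 ⟨{vN β}, ?_, ZFSet.mem_singleton.2 rfl⟩
      show ZFSet.rank ({vN β} : ZS) < β + 2
      rw [ZFSet.rank_singleton, rank_vN, ← Ordinal.add_one_eq_succ, two_eq]
      exact lt_add_one' _
    obtain ⟨β', hβ', hsat⟩ := (hcor exF (vN β) (by rw [rank_vN]; exact hβ)).1 ⟨β + 2, h1⟩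
    obtain ⟨hr, hreal⟩ := hsat
    obtain ⟨y, hy, hmemy⟩ := (realize_exF _).1 hreal
    have h2 : β < ZFSet.rank y := by
      have := ZFSet.rank_lt_of_mem hmemy; rwa [rank_vN] at this
    have h3 : ZFSet.rank y < β' := hy
    have h4 : β + 2 ≤ β' := by
      rw [two_eq]
      calc (β + 1) + 1 ≤ ZFSet.rank y + 1 := add_le_add_left (succ_le' h2) 1
        _ ≤ β' := succ_le' h3
    exact lt_of_le_of_lt h4 hβ'
  -- Part 1: the order type of s
  set e : Set.Iio lam.ord → Vseg (lam.ord + 1) :=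
    fun α => ⟨vN α.1, by show ZFSet.rank (vN α.1) < _; rw [rank_vN]; exact lt_trans α.2 hΛsucc⟩
    with he_def
  set je : Set.Iio lam.ord → ZS := fun α => (j (e α)).1 with hje_def
  have hjemono : ∀ {α β : Set.Iio lam.ord}, α.1 < β.1 → je α ∈ je β := by
    intro α β h
    exact jmem j (show (e α).1 ∈ (e β).1 from vN_mem_vN h)
  have hjerank : StrictMono (fun α : Set.Iio lam.ord => ZFSet.rank (je α)) := by
    intro α β h
    exact ZFSet.rank_lt_of_mem (hjemono h)
  have hje_inj : Function.Injective je := fun a b hab =>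
    hjerank.injective (congrArg ZFSet.rank hab)
  have hsrange : s.toSet = Set.range je := by
    ext x
    rw [ZFSet.mem_toSet, hs x]
    constructor
    · rintro ⟨a, ⟨haord, hark⟩, rfl⟩
      refine ⟨⟨ZFSet.rank a.1, hark⟩, ?_⟩
      show (j (e ⟨ZFSet.rank a.1, hark⟩)).1 = (j a).1
      congr 2
      exact Subtype.ext (eq_vN_rank haord).symm
    · rintro ⟨α, rfl⟩
      exact ⟨e α, ⟨isOrdinal_vN _, by show ZFSet.rank (vN α.1) < _; rw [rank_vN]; exact α.2⟩, rfl⟩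
  have hranks : ZFSet.rank '' s.toSet = Set.range (fun α : Set.Iio lam.ord => ZFSet.rank (je α)) := by
    rw [hsrange, ← Set.range_comp]
    rfl
  have hotype : HasOtype s lam.ord := by
    set iso := StrictMono.orderIso _ hjerank with hiso_def
    have htyeq : Ordinal.type
        (Subrel ((· < ·) : Ordinal.{0} → Ordinal.{0} → Prop) (· ∈ ZFSet.rank '' s.toSet)) =
        Ordinal.type
          (Subrel ((· < ·) : Ordinal.{0} → Ordinal.{0} → Prop) (· < lam.ord)) := by
      apply Ordinal.type_eq.2
      constructor
      refine ⟨(Equiv.setCongr (by rw [hranks])).trans iso.symm.toEquiv, ?_⟩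
      intro a b
      exact iso.symm.lt_iff_lt
    rw [HasOtype, otype, htyeq]
    exact (Ordinal.type_lt_Iio _).symm
  refine ⟨hotype, ?_⟩
  -- the canonical copy of κ in the model
  have hκΛ1 : κ < lam.ord + 1 := lt_trans hκlam hΛsucc
  set κhat : Vseg (lam.ord + 1) := ⟨vN κ, by show ZFSet.rank (vN κ) < _; rw [rank_vN]; exact hκΛ1⟩
    with hκhat_def
  have hOrdZκ : OrdZ κ κhat.1 := ⟨isOrdinal_vN κ, rank_vN κ⟩
  -- κ is not zero
  have hκne0 : κ ≠ 0 := by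
    intro h0
    have hempty : κhat.1 = ∅ := by
      show vN κ = ∅
      rw [ZFSet.eq_empty]
      intro y hy
      obtain ⟨i, hi, rfl⟩ := mem_vN.1 hy
      rw [h0] at hi
      exact absurd hi (not_lt_of_ge (zero_le (a := i)))
    have hje := jempty j hempty
    have h2 := hmove κhat hOrdZκ
    rw [hje, ZFSet.rank_empty] at h2
    exact absurd h2 (not_lt_of_ge zero_le)
  -- κ is not a successor
  have hκnsucc : ∀ γ, κ ≠ γ + 1 := by
    intro γ hsuc
    have hγκ : γ < κ := by rw [hsuc]; exact lt_add_one' γ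
    set γhat : Vseg (lam.ord + 1) :=
      ⟨vN γ, by show ZFSet.rank (vN γ) < _; rw [rank_vN]; exact lt_trans hγκ hκΛ1⟩
    have hcase : ∀ z : ZS, z ∈ vN κ → z ∈ vN γ ∨ z = vN γ := by
      intro z hz
      obtain ⟨i, hi, rfl⟩ := mem_vN.1 hz
      rw [hsuc, Ordinal.add_one_eq_succ, Order.lt_succ_iff] at hi
      rcases lt_or_eq_of_le hi with h | h
      · exact Or.inl (vN_mem_vN h)
      · exact Or.inr (by rw [h])
    have hs1 : ∀ z ∈ Vseg (lam.ord + 1), (z ∈ κhat.1 ↔ z ∈ γhat.1 ∨ z = γhat.1) := by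
      intro z _
      constructor
      · exact hcase z
      · rintro (hm | rfl)
        · obtain ⟨i, hi, rfl⟩ := mem_vN.1 hm
          exact vN_mem_vN (hi.trans hγκ)
        · exact vN_mem_vN hγκ
    have hs2 := jsucc j hs1
    have hjγ : (j γhat).1 = vN γ :=
      hfix γhat (by show ZFSet.rank (vN γ) < κ; rw [rank_vN]; exact hγκ)
    have hmv := hmove κhat hOrdZκ
    have heq : (j κhat).1 = vN κ := by
      apply ZFSet.ext
      intro z
      constructor
      · intro hzj
        have hz2 := (hs2 z (Vseg_trans (j κhat).2 hzj)).1 hzj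
        rw [hjγ] at hz2
        rcases hz2 with h | h
        · obtain ⟨i, hi, rfl⟩ := mem_vN.1 h
          exact vN_mem_vN (hi.trans hγκ)
        · rw [h]; exact vN_mem_vN hγκ
      · intro hzk
        have hzV : z ∈ Vseg (lam' + 1) := by
          have h5 : ZFSet.rank z < κ := by
            have := ZFSet.rank_lt_of_mem hzk; rwa [rank_vN] at this
          exact lt_trans h5 (lt_trans (hκlam.trans hmv) (j κhat).2)
        have h6 := (hs2 z hzV).2 (by rw [hjγ]; exact hcase z hzk)
        exact h6
    rw [heq, rank_vN] at hmv
    exact absurd hmv (not_lt.2 hκlam.le)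
  have hκlim : Order.IsSuccLimit κ := by
    rcases Ordinal.zero_or_succ_or_isSuccLimit κ with h | ⟨a, h⟩ | h
    · exact absurd h hκne0
    · exact absurd (by rw [← h, ← Ordinal.add_one_eq_succ]) (hκnsucc a)
    · exact h
  -- Step L2: κ is a cardinal
  have hκcard : κ.card.ord = κ := by
    rcases lt_or_eq_of_le (Cardinal.ord_card_le κ) with hlt | heq
    · exfalso
      have hβκ : κ.card.ord < κ := hlt
      have hmk : Cardinal.mk (Set.Iio κ.card.ord) = Cardinal.mk (Set.Iio κ) := by
        rw [Ordinal.mk_Iio_ordinal, Ordinal.mk_Iio_ordinal, Cardinal.card_ord]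
      obtain ⟨G0⟩ := Cardinal.eq.1 hmk
      have hGsurj : Function.Surjective (fun α => G0 α) := G0.surjective
      have hrg : ZFSet.rank (graphZ κ.card.ord (fun α => G0 α)) < lam.ord := by
        apply lt_of_le_of_lt (rank_graphZ_le _)
        rw [max_eq_right hβκ.le]
        exact hstep κ hκlam
      set ghat : Vseg (lam.ord + 1) :=
        ⟨graphZ κ.card.ord (fun α => G0 α), lt_trans hrg hΛsucc⟩
      set βhat : Vseg (lam.ord + 1) :=
        ⟨vN κ.card.ord, by
          show ZFSet.rank (vN κ.card.ord) < _; rw [rank_vN]; exact lt_trans hβκ hκΛ1⟩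
      have hsp : SurjPat ghat.1 βhat.1 κhat.1 := surjPat_graphZ _ hGsurj
      have hsp2 := jsurj j hsp
      have hjβ : (j βhat).1 = vN κ.card.ord :=
        hfix βhat (by show ZFSet.rank (vN κ.card.ord) < κ; rw [rank_vN]; exact hβκ)
      rw [hjβ] at hsp2
      have hsub : (j κhat).1 ⊆ vN κ := by
        intro y hy
        obtain ⟨x, hxb, hpxy⟩ := hsp2.2 y hy
        obtain ⟨i, hi, rfl⟩ := mem_vN.1 hxb
        have hrp : ZFSet.rank (ZFSet.pair (vN i) (vN (G0 ⟨i, hi⟩).1)) < κ := by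
          rw [rank_pairK, rank_vN, rank_vN]
          exact hκlim.succ_lt (hκlim.succ_lt (max_lt (hi.trans hβκ) (G0 ⟨i, hi⟩).2))
        set phat : Vseg (lam.ord + 1) :=
          ⟨ZFSet.pair (vN i) (vN (G0 ⟨i, hi⟩).1), lt_trans (lt_trans hrp hκlam) hΛsucc⟩
        have hpmem : phat.1 ∈ ghat.1 := (mem_graphZ _).2 ⟨⟨i, hi⟩, rfl⟩
        have hpin : ZFSet.pair (vN i) (vN (G0 ⟨i, hi⟩).1) ∈ (j ghat).1 := by
          have := jmem j hpmem
          rwa [hfix phat hrp] at this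
        set chat : Vseg (lam.ord + 1) :=
          ⟨vN (G0 ⟨i, hi⟩).1, by
            show ZFSet.rank (vN (G0 ⟨i, hi⟩).1) < _
            rw [rank_vN]; exact lt_trans (G0 ⟨i, hi⟩).2 hκΛ1⟩
        have hcfix : (j chat).1 = chat.1 := by
          apply hfix chat
          show ZFSet.rank (vN (G0 ⟨i, hi⟩).1) < κ
          rw [rank_vN]
          exact (G0 ⟨i, hi⟩).2
        have hcin : vN (G0 ⟨i, hi⟩).1 ∈ (j κhat).1 := by
          have := jmem j (show chat.1 ∈ κhat.1 from vN_mem_vN (G0 ⟨i, hi⟩).2)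
          rwa [hcfix] at this
        have hyy := hsp2.1 (vN i) hxb y hy (vN (G0 ⟨i, hi⟩).1) hcin hpxy hpin
        rw [hyy]
        exact vN_mem_vN (G0 ⟨i, hi⟩).2
      have hle : ZFSet.rank (j κhat).1 ≤ κ := by
        have := ZFSet.rank_mono hsub; rwa [rank_vN] at this
      exact absurd ((hmove κhat hOrdZκ).trans_le hle) (not_lt.2 hκlam.le)
    · exact heq
  -- the Σ₂-correctness transfer helper
  have hsig : ∀ X : Ordinal.{0}, lam.ord < X → Sigma2CorrectIn lam.ord X := by
    intro X hX
    refine ⟨hX, fun φ a ha => ⟨?_, ?_⟩⟩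
    · rintro ⟨β, _, hsat⟩
      exact (hcor φ a ha).1 ⟨β, hsat⟩
    · rintro ⟨β, hβ, hsat⟩
      exact ⟨β, lt_trans hβ hX, hsat⟩
  -- Part 2
  intro kZ hk
  have hkZ1 : kZ.1 = vN κ := by
    have := eq_vN_rank hk.1; rwa [hk.2] at this
  have hΛρ : lam.ord < ZFSet.rank (j kZ).1 := hmove kZ hk
  have hρord : ZFSet.IsOrdinal (j kZ).1 := jord j (by rw [hkZ1]; exact isOrdinal_vN κ)
  have hjk_eq : (j kZ).1 = vN (ZFSet.rank (j kZ).1) := eq_vN_rank hρord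
  set Λhat : Vseg (lam.ord + 1) :=
    ⟨vN lam.ord, by show ZFSet.rank (vN lam.ord) < _; rw [rank_vN]; exact hΛsucc⟩
  have hkΛ : kZ.1 ∈ Λhat.1 := by rw [hkZ1]; exact vN_mem_vN hκlam
  have hρρL : ZFSet.rank (j kZ).1 < ZFSet.rank (j Λhat).1 :=
    ZFSet.rank_lt_of_mem (jmem j hkΛ)
  have hρLord : ZFSet.IsOrdinal (j Λhat).1 := jord j (isOrdinal_vN lam.ord)
  have hjΛ_eq : (j Λhat).1 = vN (ZFSet.rank (j Λhat).1) := eq_vN_rank hρLord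
  have hΛlimZS : (∃ y, y ∈ Λhat.1) ∧ ∀ y ∈ Λhat.1, ∃ z ∈ Λhat.1, y ∈ z := by
    constructor
    · exact ⟨vN 0, vN_mem_vN hΛpos⟩
    · intro y hy
      obtain ⟨i, hi, rfl⟩ := mem_vN.1 hy
      have hi1 : i + 1 < lam.ord := by
        have := hstep i hi
        rw [two_eq] at this
        exact lt_trans (lt_add_one' (i + 1)) this
      exact ⟨vN (i + 1), vN_mem_vN hi1, vN_mem_vN (lt_add_one' i)⟩
  have hρLlim : Order.IsSuccLimit (ZFSet.rank (j Λhat).1) := by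
    have hl := jlimit j hΛlimZS
    rcases Ordinal.zero_or_succ_or_isSuccLimit (ZFSet.rank (j Λhat).1) with h0 | ⟨t, hsucc⟩ | h
    · exfalso
      obtain ⟨y, hy⟩ := hl.1
      rw [hjΛ_eq, h0] at hy
      obtain ⟨i, hi, _⟩ := mem_vN.1 hy
      exact absurd hi (not_lt_of_ge (zero_le (a := i)))
    · exfalso
      have htmem : vN t ∈ (j Λhat).1 := by
        rw [hjΛ_eq, ← hsucc]
        exact vN_mem_vN (Order.lt_succ t)
      obtain ⟨z, hz, htz⟩ := hl.2 _ htmem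
      have h1 : ZFSet.rank z < Order.succ t := by
        have := ZFSet.rank_lt_of_mem hz
        rwa [← hsucc] at this
      have h2 : t < ZFSet.rank z := by
        have := ZFSet.rank_lt_of_mem htz
        rwa [rank_vN] at this
      exact absurd h2 (not_lt.2 (Order.lt_succ_iff.1 h1))
    · exact h
  have hρLlam' : ZFSet.rank (j Λhat).1 ≤ lam' := by
    have h7 : ZFSet.rank (j Λhat).1 < lam' + 1 := (j Λhat).2
    exact Order.le_of_lt_succ (lt_of_lt_of_le h7 (le_of_eq (Ordinal.add_one_eq_succ lam')))
  -- the crux: lam < |j(κ)|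
  have hcrux : lam < (ZFSet.rank (j kZ).1).card := by
    by_contra hle
    push_neg at hle
    have hVcard : ∀ b ∈ Vseg (lam.ord + 1), ∀ f ∈ Vseg (lam.ord + 1),
        b ∈ kZ.1 → ¬ SurjPat f b kZ.1 := by
      intro b _ f _ hbk hsp
      rw [hkZ1] at hbk hsp
      obtain ⟨β₀, hβ₀, rfl⟩ := mem_vN.1 hbk
      have hmle := hsp.mk_le
      rw [mk_toSet_vN, mk_toSet_vN] at hmle
      have hcc : κ.card ≤ β₀.card := Cardinal.lift_le.1 hmle
      have hκβ : κ ≤ β₀ := by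
        calc κ = κ.card.ord := hκcard.symm
          _ ≤ β₀.card.ord := Cardinal.ord_le_ord.2 hcc
          _ ≤ β₀ := Cardinal.ord_card_le β₀
      exact absurd hβ₀ (not_lt.2 hκβ)
    have hMcard := jcard j hVcard
    have hρpos : 0 < ZFSet.rank (j kZ).1 := lt_of_le_of_lt zero_le hΛρ
    have hne : Nonempty (Set.Iio (ZFSet.rank (j kZ).1)) := ⟨⟨0, hρpos⟩⟩
    have hmkle : Cardinal.mk (Set.Iio (ZFSet.rank (j kZ).1)) ≤
        Cardinal.mk (Set.Iio lam.ord) := by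
      rw [Ordinal.mk_Iio_ordinal, Ordinal.mk_Iio_ordinal, Cardinal.card_ord]
      exact Cardinal.lift_le.2 hle
    obtain ⟨ι⟩ := (Cardinal.le_def _ _).1 hmkle
    have hGsurj : Function.Surjective (Function.invFun ι) :=
      Function.invFun_surjective ι.injective
    have hrg2 : ZFSet.rank (graphZ lam.ord (Function.invFun ι)) < lam' + 1 := by
      apply lt_of_le_of_lt (rank_graphZ_le _)
      rw [max_eq_right hΛρ.le]
      have h1 : ZFSet.rank (j kZ).1 + 2 < ZFSet.rank (j Λhat).1 := by
        rw [two_eq, Ordinal.add_one_eq_succ, Ordinal.add_one_eq_succ]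
        exact hρLlim.succ_lt (hρLlim.succ_lt hρρL)
      exact lt_trans (lt_of_lt_of_le h1 hρLlam') (lt_add_one' lam')
    have hsp2 : SurjPat (graphZ lam.ord (Function.invFun ι)) (vN lam.ord)
        (vN (ZFSet.rank (j kZ).1)) := surjPat_graphZ _ hGsurj
    refine hMcard (vN lam.ord) ?_ (graphZ lam.ord (Function.invFun ι)) hrg2 ?_ ?_
    · show ZFSet.rank (vN lam.ord) < lam' + 1
      rw [rank_vN]
      exact lt_trans (lt_trans hΛρ hρρL) (lt_of_le_of_lt hρLlam' (lt_add_one' lam'))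
    · have hmm : vN lam.ord ∈ vN (ZFSet.rank (j kZ).1) := vN_mem_vN hΛρ
      rwa [← hjk_eq] at hmm
    · have hmm := hsp2
      rw [← hjk_eq] at hmm
      exact hmm
  refine ⟨hsig _ hΛρ, ?_⟩
  intro lamZ hlamZ
  have hlamZ1 : lamZ.1 = vN lam.ord := by
    have := eq_vN_rank hlamZ.1; rwa [hlamZ.2] at this
  refine ⟨⟨?_, ?_⟩, lam.ord, hotype, hsig _ (by
    show lam.ord < ((ZFSet.rank (j kZ).1).card).ord
    exact Cardinal.ord_lt_ord.2 hcrux)⟩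
  · intro x hx
    obtain ⟨a, ⟨haord, hark⟩, rfl⟩ := (hs x).1 hx
    refine ⟨jord j haord, ?_⟩
    have hmema : a.1 ∈ lamZ.1 := by
      rw [hlamZ1]
      have : a.1 = vN (ZFSet.rank a.1) := eq_vN_rank haord
      rw [this]
      exact vN_mem_vN hark
    exact ZFSet.rank_lt_of_mem (jmem j hmema)
  · rw [hsrange, Cardinal.mk_range_eq je hje_inj, Ordinal.mk_Iio_ordinal, Cardinal.card_ord]
    exact Cardinal.lift_lt.2 hcrux
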